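/- For every integer n ≥ 1, the Fourier coefficient a_n = (8/π) ∫_0^{π/4} cos(4nt)/cos(t) dt satisfies a_n = (8/π) ln(1 + √2) - (8√2/π) S_n, where S_n = ∑_{k=1}^{n} (-1)^{k-1} (1/(4k-3) - 1/(4k-1)). -/

import Mathlib

open Real

/-- The Fourier cosine coefficients of F(x) = 1/cos(x/4) on [-π, π]. -/
noncomputable def fourierA (n : ℕ) : ℝ :=
  (8 / π) * ∫ t in (0:ℝ)..(π / 4), Real.cos (4 * n * t) / Real.cos t

lemma cos_pos_on : ∀ t ∈ Set.uIcc (0:ℝ) (π/4), 0 < Real.cos t := by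
  intro t ht
  rw [Set.uIcc_of_le (by positivity)] at ht
  exact Real.cos_pos_of_mem_Ioo ⟨by linarith [ht.1, Real.pi_pos], by
    have := Real.pi_pos; cases ht; linarith⟩

lemma integ (c : ℝ) : IntervalIntegrable (fun t => Real.cos (c * t) / Real.cos t)
    MeasureTheory.volume 0 (π/4) := by
  apply ContinuousOn.intervalIntegrable
  apply ContinuousOn.div
  · exact (Real.continuous_cos.comp (continuous_const.mul continuous_id)).continuousOn
  · exact Real.continuous_cos.continuousOn
  · intro t ht; exact (cos_pos_on t ht).ne'

lemma integral_cos_mul (c : ℝ) (hc : c ≠ 0) (b : ℝ) :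
    ∫ t in (0:ℝ)..b, Real.cos (c * t) = Real.sin (c * b) / c := by
  have h : ∀ t ∈ Set.uIcc (0:ℝ) b, HasDerivAt (fun x => Real.sin (c * x) / c)
      (Real.cos (c * t)) t := by
    intro t _
    have hlin : HasDerivAt (fun x : ℝ => c * x) c t := by
      simpa using (hasDerivAt_id t).const_mul c
    have h1 : HasDerivAt (fun x => Real.sin (c * x)) (Real.cos (c * t) * c) t :=
      (Real.hasDerivAt_sin (c * t)).comp t hlin
    simpa [mul_div_assoc, mul_div_cancel_right₀ _ hc] using h1.div_const c
  have := intervalIntegral.integral_eq_sub_of_hasDerivAt h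
    (by apply ContinuousOn.intervalIntegrable;
        exact (Real.continuous_cos.comp (continuous_const.mul continuous_id)).continuousOn)
  simpa [mul_zero] using this

lemma a_zero : fourierA 0 = (8 / π) * Real.log (1 + Real.sqrt 2) := by
  unfold fourierA
  congr 1
  have hEq : Set.EqOn (fun t => Real.cos (4 * (0:ℕ) * t) / Real.cos t)
      (fun t => 1 / Real.cos t) (Set.uIcc (0:ℝ) (π/4)) := by
    intro t _; simp
  rw [intervalIntegral.integral_congr hEq]
  have h : ∀ t ∈ Set.uIcc (0:ℝ) (π/4),
      HasDerivAt (fun x => Real.log (1 + Real.sin x) - Real.log (Real.cos x))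
        (1 / Real.cos t) t := by
    intro t ht
    have hc : 0 < Real.cos t := cos_pos_on t ht
    have ht' : t ∈ Set.Icc (0:ℝ) (π/4) := by
      rwa [Set.uIcc_of_le (by positivity)] at ht
    have hsin : 0 ≤ Real.sin t :=
      Real.sin_nonneg_of_nonneg_of_le_pi ht'.1 (by nlinarith [Real.pi_pos, ht'.2])
    have hs : (0:ℝ) < 1 + Real.sin t := by linarith
    have h1 : HasDerivAt (fun x => Real.log (1 + Real.sin x))
        (Real.cos t / (1 + Real.sin t)) t := by
      have := ((Real.hasDerivAt_sin t).const_add 1).log hs.ne'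
      simpa using this
    have h2 : HasDerivAt (fun x => Real.log (Real.cos x))
        (-Real.sin t / Real.cos t) t := by
      have := (Real.hasDerivAt_cos t).log hc.ne'
      simpa using this
    have h3 := h1.sub h2
    have key : Real.cos t / (1 + Real.sin t) - (-Real.sin t / Real.cos t) = 1 / Real.cos t := by
      have pyth := Real.sin_sq_add_cos_sq t
      field_simp
      nlinarith [pyth]
    rwa [key] at h3
  rw [intervalIntegral.integral_eq_sub_of_hasDerivAt h (by
    apply ContinuousOn.intervalIntegrable
    apply ContinuousOn.div continuousOn_const Real.continuous_cos.continuousOn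
    intro t ht; exact (cos_pos_on t ht).ne')]
  simp only [Real.sin_pi_div_four, Real.cos_pi_div_four, Real.sin_zero, Real.cos_zero,
    Real.log_one]
  have h2 : Real.sqrt 2 * Real.sqrt 2 = 2 := Real.mul_self_sqrt (by norm_num)
  have hs2 : (0:ℝ) < Real.sqrt 2 := by positivity
  rw [← Real.log_div (by positivity) (by positivity)]
  have harg : (1 + Real.sqrt 2 / 2) / (Real.sqrt 2 / 2) = 1 + Real.sqrt 2 := by
    rw [div_eq_iff (by positivity)]
    nlinarith [h2]
  rw [harg]
  norm_num

lemma a_step (n : ℕ) :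
    fourierA (n + 1) = fourierA n
      + (8 * Real.sqrt 2 / π) * (-1:ℝ) ^ (n+1)
          * (1 / (4 * (n:ℝ) + 1) - 1 / (4 * (n:ℝ) + 3)) := by
  have hπ := Real.pi_pos
  have key : (∫ t in (0:ℝ)..(π/4), Real.cos (4 * ((n:ℝ)+1) * t) / Real.cos t)
      - (∫ t in (0:ℝ)..(π/4), Real.cos (4 * (n:ℝ) * t) / Real.cos t)
      = Real.sqrt 2 * (-1:ℝ)^(n+1) * (1 / (4 * (n:ℝ) + 1) - 1 / (4 * (n:ℝ) + 3)) := by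
    rw [← intervalIntegral.integral_sub (integ _) (integ _)]
    have hEq : Set.EqOn
        (fun t => Real.cos (4 * ((n:ℝ)+1) * t) / Real.cos t
          - Real.cos (4 * (n:ℝ) * t) / Real.cos t)
        (fun t => 2 * Real.cos ((4 * (n:ℝ) + 3) * t) - 2 * Real.cos ((4 * (n:ℝ) + 1) * t))
        (Set.uIcc (0:ℝ) (π/4)) := by
      intro t ht
      have hc : Real.cos t ≠ 0 := (cos_pos_on t ht).ne'
      simp only
      rw [div_sub_div_same, div_eq_iff hc]
      have e1 : 4 * ((n:ℝ)+1) * t = (4 * (n:ℝ) + 2) * t + (t + t) := by ring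
      have e2 : 4 * (n:ℝ) * t = (4 * (n:ℝ) + 2) * t - (t + t) := by ring
      have e3 : (4 * (n:ℝ) + 3) * t = (4 * (n:ℝ) + 2) * t + t := by ring
      have e4 : (4 * (n:ℝ) + 1) * t = (4 * (n:ℝ) + 2) * t - t := by ring
      rw [e1, e2, e3, e4, Real.cos_add, Real.cos_sub, Real.cos_add, Real.cos_sub,
        Real.cos_add, Real.sin_add]
      ring
    rw [intervalIntegral.integral_congr hEq]
    have h1 : (4 * (n:ℝ) + 3) ≠ 0 := by positivity
    have h2 : (4 * (n:ℝ) + 1) ≠ 0 := by positivity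
    have ii : ∀ c : ℝ, IntervalIntegrable (fun t => Real.cos (c * t))
        MeasureTheory.volume 0 (π/4) := by
      intro c
      exact (Continuous.intervalIntegrable (by continuity) _ _)
    rw [intervalIntegral.integral_sub ((ii _).const_mul 2) ((ii _).const_mul 2),
      intervalIntegral.integral_const_mul, intervalIntegral.integral_const_mul,
      integral_cos_mul _ h1, integral_cos_mul _ h2]
    have cnpi : Real.cos ((n:ℝ) * π) = (-1:ℝ)^n := by
      simpa using Real.cos_nat_mul_pi_sub 0 n
    have s1 : Real.sin ((4 * (n:ℝ) + 3) * (π/4)) = (-1:ℝ)^n * (Real.sqrt 2 / 2) := by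
      have : (4 * (n:ℝ) + 3) * (π/4) = (n:ℝ) * π + (π - π/4) := by ring
      rw [this, Real.sin_add, Real.sin_nat_mul_pi, Real.sin_pi_sub, cnpi,
        Real.sin_pi_div_four]
      ring
    have s2 : Real.sin ((4 * (n:ℝ) + 1) * (π/4)) = (-1:ℝ)^n * (Real.sqrt 2 / 2) := by
      have : (4 * (n:ℝ) + 1) * (π/4) = (n:ℝ) * π + π/4 := by ring
      rw [this, Real.sin_add, Real.sin_nat_mul_pi, cnpi, Real.sin_pi_div_four]
      ring
    rw [s1, s2, pow_succ]
    field_simp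
    ring
  have cast1 : ((n+1 : ℕ) : ℝ) = (n:ℝ) + 1 := by push_cast; ring
  unfold fourierA
  rw [cast1]
  set I1 := (∫ t in (0:ℝ)..(π/4), Real.cos (4 * ((n:ℝ)+1) * t) / Real.cos t) with hI1
  set I0 := (∫ t in (0:ℝ)..(π/4), Real.cos (4 * (n:ℝ) * t) / Real.cos t) with hI0
  have expand : (8/π) * I1 = (8/π) * I0 + (8/π) * (I1 - I0) := by ring
  rw [expand, key]
  ring

/-- For n ≥ 1, aₙ = (8/π) ln(1+√2) - (8√2/π) Sₙ where
Sₙ = ∑_{k=1}^{n} (-1)^{k-1} (1/(4k-3) - 1/(4k-1)). -/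
theorem fourier_coeff_partial_sum (n : ℕ) (hn : 1 ≤ n) :
    fourierA n
      = (8 / π) * Real.log (1 + Real.sqrt 2)
        - (8 * Real.sqrt 2 / π)
            * ∑ k ∈ Finset.Icc 1 n,
                (-1 : ℝ) ^ (k - 1) * (1 / (4 * (k : ℝ) - 3) - 1 / (4 * (k : ℝ) - 1)) := by
  induction n, hn using Nat.le_induction with
  | base =>
    have h := a_step 0
    rw [a_zero] at h
    rw [h]
    norm_num
    ring
  | succ n hn ih =>
    have h := a_step n
    rw [ih] at h
    rw [h]
    rw [Finset.sum_Icc_succ_top (by omega : 1 ≤ n + 1)]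
    have hc : ((n+1 : ℕ) : ℝ) = (n:ℝ) + 1 := by push_cast; ring
    rw [hc]
    have hpow : (-1:ℝ) ^ (n + 1 - 1) = (-1:ℝ)^n := by norm_num
    rw [hpow]
    have e1 : 4 * ((n:ℝ) + 1) - 3 = 4 * (n:ℝ) + 1 := by ring
    have e2 : 4 * ((n:ℝ) + 1) - 1 = 4 * (n:ℝ) + 3 := by ring
    rw [e1, e2, pow_succ]
    ring
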